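/- arXiv:math/0606109 — 4 statements merged into one kernel-verified Lean document; each statement's English description precedes it below -/
import Mathlib

section
/- Let O be a Dedekind domain with fraction field k, and let a, c be nonzero fractional ideals. Suppose q, s, m, n ∈ k satisfy q·a^{-1} + s·O = m·a^{-1} + n·O = c (equalities of fractional ideals). Then there exists a 2×2 matrix γ = (γ_{ij}) with γ_{11} ∈ O, γ_{12} ∈ a, γ_{21} ∈ a^{-1}, γ_{22} ∈ O and det γ ∈ O^×, such that γ·(m, n)^T = (q, s)^T. -/
open FractionalIdeal

section Aux
variable {O k : Type*} [CommRing O] [Field k] [Algebra O k] [IsFractionRing O k]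

lemma extract_pair (I J : FractionalIdeal (nonZeroDivisors O) k) (m n : k)
    (h : spanSingleton (nonZeroDivisors O) m * I + spanSingleton (nonZeroDivisors O) n * J = 1) :
    ∃ x ∈ I, ∃ y ∈ J, m * x + n * y = 1 := by
  have h1 : (1 : k) ∈ spanSingleton (nonZeroDivisors O) m * I +
      spanSingleton (nonZeroDivisors O) n * J := by rw [h]; exact one_mem_one _
  rw [← FractionalIdeal.mem_coe, FractionalIdeal.coe_add, Submodule.add_eq_sup,
    Submodule.mem_sup] at h1
  obtain ⟨u, hu, v, hv, huv⟩ := h1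
  rw [FractionalIdeal.mem_coe] at hu hv
  obtain ⟨x, hx, hux⟩ := mem_singleton_mul.mp hu
  obtain ⟨y, hy, hvy⟩ := mem_singleton_mul.mp hv
  exact ⟨x, hx, y, hy, by rw [← hux, ← hvy, huv]⟩

end Aux

/-- Let `O` be a Dedekind domain with fraction field `k` and `a`, `c` nonzero fractional
ideals. If `q, s, m, n ∈ k` satisfy `q·a⁻¹ + s·O = m·a⁻¹ + n·O = c`, then there is a
2×2 matrix `γ` with entries `γ₁₁ ∈ O`, `γ₁₂ ∈ a`, `γ₂₁ ∈ a⁻¹`, `γ₂₂ ∈ O` and unit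
determinant such that `γ·(m,n)ᵀ = (q,s)ᵀ`. -/
theorem exists_matrix_of_fractionalIdeal_generators
    (O k : Type*) [CommRing O] [IsDedekindDomain O] [Field k] [Algebra O k]
    [IsFractionRing O k]
    (a c : FractionalIdeal (nonZeroDivisors O) k) (ha : a ≠ 0) (hc : c ≠ 0)
    (q s m n : k)
    (hqs : spanSingleton (nonZeroDivisors O) q * a⁻¹ +
        spanSingleton (nonZeroDivisors O) s * 1 = c)
    (hmn : spanSingleton (nonZeroDivisors O) m * a⁻¹ +
        spanSingleton (nonZeroDivisors O) n * 1 = c) :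
    ∃ γ : Matrix (Fin 2) (Fin 2) k,
      γ 0 0 ∈ (1 : FractionalIdeal (nonZeroDivisors O) k) ∧
      γ 0 1 ∈ a ∧
      γ 1 0 ∈ a⁻¹ ∧
      γ 1 1 ∈ (1 : FractionalIdeal (nonZeroDivisors O) k) ∧
      (∃ u : Oˣ, algebraMap O k u = γ.det) ∧
      γ.mulVec ![m, n] = ![q, s] := by
  have hcc : c * c⁻¹ = 1 := mul_inv_cancel₀ hc
  have haa : a⁻¹ * a = 1 := by
    rw [mul_comm]; exact mul_inv_cancel₀ ha
  -- obtain unimodular companions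
  have key : ∀ u v : k, spanSingleton (nonZeroDivisors O) u * a⁻¹ +
      spanSingleton (nonZeroDivisors O) v * 1 = c →
      ∃ x ∈ a⁻¹ * c⁻¹, ∃ y ∈ c⁻¹, u * x + v * y = 1 := by
    intro u v huv
    apply extract_pair
    calc spanSingleton (nonZeroDivisors O) u * (a⁻¹ * c⁻¹) +
        spanSingleton (nonZeroDivisors O) v * c⁻¹
        = (spanSingleton (nonZeroDivisors O) u * a⁻¹ +
          spanSingleton (nonZeroDivisors O) v * 1) * c⁻¹ := by ring
      _ = 1 := by rw [huv, hcc]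
  obtain ⟨x, hx, y, hy, hA⟩ := key m n hmn
  obtain ⟨x', hx', y', hy', hB⟩ := key q s hqs
  -- memberships of m, n, q, s
  have hmem : ∀ u v : k, spanSingleton (nonZeroDivisors O) u * a⁻¹ +
      spanSingleton (nonZeroDivisors O) v * 1 = c → u ∈ c * a ∧ v ∈ c := by
    intro u v huv
    have h1 : spanSingleton (nonZeroDivisors O) u * a⁻¹ ≤ c := by
      rw [← huv, ← FractionalIdeal.sup_eq_add]; exact le_sup_left
    have h2 : spanSingleton (nonZeroDivisors O) v * 1 ≤ c := by
      rw [← huv, ← FractionalIdeal.sup_eq_add]; exact le_sup_right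
    constructor
    · rw [← spanSingleton_le_iff_mem]
      calc spanSingleton (nonZeroDivisors O) u
          = spanSingleton (nonZeroDivisors O) u * a⁻¹ * a := by rw [mul_assoc, haa, mul_one]
        _ ≤ c * a := mul_left_mono h1
    · rw [← spanSingleton_le_iff_mem]
      simpa using h2
  obtain ⟨hm, hn⟩ := hmem m n hmn
  obtain ⟨hq, hs⟩ := hmem q s hqs
  refine ⟨!![q * x + y' * n, q * y - y' * m; s * x - x' * n, s * y + x' * m], ?_, ?_, ?_, ?_, ?_, ?_⟩
  · simp only [Matrix.cons_val', Matrix.cons_val_zero, Matrix.empty_val',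
      Matrix.cons_val_fin_one, Matrix.of_apply]
    have h1 : q * x ∈ (c * a) * (a⁻¹ * c⁻¹) := mul_mem_mul hq hx
    have h2 : y' * n ∈ c⁻¹ * c := mul_mem_mul hy' hn
    rw [show (c * a) * (a⁻¹ * c⁻¹) = (a⁻¹ * a) * (c * c⁻¹) from by ring, haa, hcc, one_mul] at h1
    rw [mul_comm c⁻¹ c, hcc] at h2
    rw [← FractionalIdeal.mem_coe] at h1 h2 ⊢
    exact add_mem h1 h2
  · simp only [Matrix.cons_val', Matrix.cons_val_zero, Matrix.cons_val_one, Matrix.head_cons,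
      Matrix.empty_val', Matrix.cons_val_fin_one, Matrix.of_apply, Matrix.head_fin_const]
    have h1 : q * y ∈ (c * a) * c⁻¹ := mul_mem_mul hq hy
    have h2 : y' * m ∈ c⁻¹ * (c * a) := mul_mem_mul hy' hm
    rw [show (c * a) * c⁻¹ = (c * c⁻¹) * a from by ring, hcc, one_mul] at h1
    rw [show c⁻¹ * (c * a) = (c * c⁻¹) * a from by ring, hcc, one_mul] at h2
    rw [← FractionalIdeal.mem_coe] at h1 h2 ⊢
    exact sub_mem h1 h2
  · simp only [Matrix.cons_val', Matrix.cons_val_zero, Matrix.cons_val_one, Matrix.head_cons,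
      Matrix.empty_val', Matrix.cons_val_fin_one, Matrix.of_apply, Matrix.head_fin_const]
    have h1 : s * x ∈ c * (a⁻¹ * c⁻¹) := mul_mem_mul hs hx
    have h2 : x' * n ∈ (a⁻¹ * c⁻¹) * c := mul_mem_mul hx' hn
    rw [show c * (a⁻¹ * c⁻¹) = (c * c⁻¹) * a⁻¹ from by ring, hcc, one_mul] at h1
    rw [show (a⁻¹ * c⁻¹) * c = (c * c⁻¹) * a⁻¹ from by ring, hcc, one_mul] at h2
    rw [← FractionalIdeal.mem_coe] at h1 h2 ⊢
    exact sub_mem h1 h2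
  · simp only [Matrix.cons_val', Matrix.cons_val_zero, Matrix.cons_val_one, Matrix.head_cons,
      Matrix.empty_val', Matrix.cons_val_fin_one, Matrix.of_apply, Matrix.head_fin_const]
    have h1 : s * y ∈ c * c⁻¹ := mul_mem_mul hs hy
    have h2 : x' * m ∈ (a⁻¹ * c⁻¹) * (c * a) := mul_mem_mul hx' hm
    rw [hcc] at h1
    rw [show (a⁻¹ * c⁻¹) * (c * a) = (a⁻¹ * a) * (c * c⁻¹) from by ring, haa, hcc, one_mul] at h2
    rw [← FractionalIdeal.mem_coe] at h1 h2 ⊢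
    exact add_mem h1 h2
  · refine ⟨1, ?_⟩
    simp only [Units.val_one, _root_.map_one, Matrix.det_fin_two_of]
    linear_combination (-(q * x') - s * y') * hA - hB
  · funext i
    fin_cases i <;> simp [Matrix.mulVec, dotProduct]
    · linear_combination q * hA
    · linear_combination s * hA
end

section
/- Let O be a Dedekind domain with fraction field k. Suppose R = O ⊕ O·ω₁ ⊕ a·ω₂ is a commutative O-algebra structure on the module O ⊕ O ⊕ a with identity (1,0,0), satisfying ω₁ω₂ = −ad, ω₁² = −ac − bω₁ + aω₂, ω₂² = −bd − dω₁ + cω₂ for some a, b, c, d ∈ k. If R is an O-algebra (closed under multiplication), then necessarily a ∈ 𝔞, b ∈ O, c ∈ 𝔞^{-1}, d ∈ 𝔞^{-2}, where 𝔞 is the fractional ideal a. -/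
/-- Let `O` be a Dedekind domain with fraction field `k`, `𝔞` a nonzero fractional ideal,
and `A` a commutative `k`-algebra containing `k`-linearly independent elements `1, ω₁, ω₂`
satisfying the multiplication relations `ω₁ω₂ = −ad`, `ω₁² = −ac − bω₁ + aω₂`,
`ω₂² = −bd − dω₁ + cω₂`. If the `O`-module `R = O ⊕ O·ω₁ ⊕ 𝔞·ω₂` is closed under
multiplication (i.e. `O·ω₁²`, `𝔞·ω₁ω₂`, `𝔞²·ω₂²` lie in `R`), then necessarily
`a ∈ 𝔞`, `b ∈ O`, `c ∈ 𝔞⁻¹`, `d ∈ 𝔞⁻²`. -/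
theorem coefficients_membership_of_cubic_multiplication
    (O k : Type*) [CommRing O] [IsDedekindDomain O] [Field k] [Algebra O k]
    [IsFractionRing O k]
    (A : Type*) [CommRing A] [Algebra k A] [Algebra O A] [IsScalarTower O k A]
    (𝔞 : FractionalIdeal (nonZeroDivisors O) k) (h𝔞 : 𝔞 ≠ 0)
    (a b c d : k) (ω₁ ω₂ : A)
    (hind : LinearIndependent k ![(1 : A), ω₁, ω₂])
    (h12 : ω₁ * ω₂ = algebraMap k A (-(a * d)))
    (h11 : ω₁ * ω₁ = algebraMap k A (-(a * c)) - algebraMap k A b * ω₁ +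
      algebraMap k A a * ω₂)
    (h22 : ω₂ * ω₂ = algebraMap k A (-(b * d)) - algebraMap k A d * ω₁ +
      algebraMap k A c * ω₂)
    (R : Set A)
    (hR : R = {z | ∃ p q : O, ∃ r : k, r ∈ 𝔞 ∧
      z = algebraMap O A p + algebraMap O A q * ω₁ + algebraMap k A r * ω₂})
    (hc1 : ω₁ * ω₁ ∈ R)
    (hc2 : ∀ x : k, x ∈ 𝔞 → algebraMap k A x * (ω₁ * ω₂) ∈ R)
    (hc3 : ∀ x : k, x ∈ 𝔞 * 𝔞 → algebraMap k A x * (ω₂ * ω₂) ∈ R) :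
    a ∈ 𝔞 ∧ b ∈ (1 : FractionalIdeal (nonZeroDivisors O) k) ∧ c ∈ 𝔞⁻¹ ∧ d ∈ 𝔞⁻¹ * 𝔞⁻¹ := by
  -- coordinate-zero lemma
  have hzero : ∀ α β γ : k, α • (1:A) + β • ω₁ + γ • ω₂ = 0 → α = 0 ∧ β = 0 ∧ γ = 0 := by
    intro α β γ h
    have := Fintype.linearIndependent_iff.mp hind ![α, β, γ] ?_
    · exact ⟨this 0, this 1, this 2⟩
    · simpa [Fin.sum_univ_three, add_assoc] using h
  -- extraction lemma
  have hext : ∀ α β γ : k,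
      (algebraMap k A α + algebraMap k A β * ω₁ + algebraMap k A γ * ω₂) ∈ R →
      (∃ p : O, algebraMap O k p = α) ∧ (∃ q : O, algebraMap O k q = β) ∧ γ ∈ 𝔞 := by
    intro α β γ hmem
    rw [hR] at hmem
    obtain ⟨p, q, r, hr, hz⟩ := hmem
    have hp : algebraMap O A p = algebraMap k A (algebraMap O k p) := by
      rw [IsScalarTower.algebraMap_apply O k A]
    have hq : algebraMap O A q = algebraMap k A (algebraMap O k q) := by
      rw [IsScalarTower.algebraMap_apply O k A]
    rw [hp, hq] at hz
    have hcomb : (α - algebraMap O k p) • (1:A) + (β - algebraMap O k q) • ω₁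
        + (γ - r) • ω₂ = 0 := by
      have : algebraMap k A α + algebraMap k A β * ω₁ + algebraMap k A γ * ω₂
          - (algebraMap k A (algebraMap O k p) + algebraMap k A (algebraMap O k q) * ω₁
            + algebraMap k A r * ω₂) = 0 := by
        rw [← hz]; ring
      rw [← this]
      simp only [sub_smul, Algebra.smul_def, mul_one, map_sub]
      ring
    obtain ⟨h1, h2, h3⟩ := hzero _ _ _ hcomb
    refine ⟨⟨p, (sub_eq_zero.mp h1).symm⟩, ⟨q, (sub_eq_zero.mp h2).symm⟩, ?_⟩
    have : γ = r := sub_eq_zero.mp h3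
    rwa [this]
  -- from hc1
  rw [h11] at hc1
  have heq1 : algebraMap k A (-(a * c)) - algebraMap k A b * ω₁ + algebraMap k A a * ω₂
      = algebraMap k A (-(a*c)) + algebraMap k A (-b) * ω₁ + algebraMap k A a * ω₂ := by
    simp [sub_eq_add_neg, map_neg]
  have hc1' := hext (-(a*c)) (-b) a (heq1 ▸ hc1)
  obtain ⟨-, ⟨q, hq⟩, ha⟩ := hc1'
  have hb : b ∈ (1 : FractionalIdeal (nonZeroDivisors O) k) := by
    rw [FractionalIdeal.mem_one_iff]
    exact ⟨-q, by rw [map_neg, hq, neg_neg]⟩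
  -- from hc3
  have hc3' : ∀ x : k, x ∈ 𝔞 * 𝔞 → (∃ q : O, algebraMap O k q = -(x * d)) ∧ x * c ∈ 𝔞 := by
    intro x hx
    have := hc3 x hx
    rw [h22] at this
    have heq : algebraMap k A x * (algebraMap k A (-(b * d)) - algebraMap k A d * ω₁ +
        algebraMap k A c * ω₂)
        = algebraMap k A (-(x*(b*d))) + algebraMap k A (-(x*d)) * ω₁
          + algebraMap k A (x*c) * ω₂ := by
      simp [map_neg, map_mul]
      ring
    have h := hext (-(x*(b*d))) (-(x*d)) (x*c) (heq ▸ this)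
    exact ⟨h.2.1, h.2.2⟩
  have hne : 𝔞 * 𝔞 ≠ 0 := mul_ne_zero h𝔞 h𝔞
  have hd : d ∈ (𝔞 * 𝔞)⁻¹ := by
    rw [FractionalIdeal.mem_inv_iff hne]
    intro y hy
    obtain ⟨⟨q, hq⟩, -⟩ := hc3' y hy
    rw [FractionalIdeal.mem_one_iff]
    exact ⟨-q, by rw [map_neg, hq]; ring⟩
  have hinv : (𝔞 * 𝔞)⁻¹ = 𝔞⁻¹ * 𝔞⁻¹ := mul_inv 𝔞 𝔞
  have hc : c ∈ 𝔞⁻¹ := by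
    have hle : FractionalIdeal.spanSingleton (nonZeroDivisors O) c * (𝔞 * 𝔞) ≤ 𝔞 := by
      rw [FractionalIdeal.mul_le]
      intro i hi j hj
      obtain ⟨z, hz⟩ := (FractionalIdeal.mem_spanSingleton _).mp hi
      obtain ⟨-, h⟩ := hc3' j hj
      rw [← hz, smul_mul_assoc]
      exact Submodule.smul_mem _ z (by rwa [mul_comm] at h)
    have h2 : FractionalIdeal.spanSingleton (nonZeroDivisors O) c * (𝔞 * 𝔞) * (𝔞 * 𝔞)⁻¹
        ≤ 𝔞 * (𝔞 * 𝔞)⁻¹ := mul_left_mono hle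
    rw [mul_assoc, mul_inv_cancel₀ hne, mul_one] at h2
    have h3 : 𝔞 * (𝔞 * 𝔞)⁻¹ = 𝔞⁻¹ := by
      rw [hinv, ← mul_assoc, mul_inv_cancel₀ h𝔞, one_mul]
    rw [h3] at h2
    exact FractionalIdeal.spanSingleton_le_iff_mem.mp h2
  exact ⟨ha, hb, hc, hinv ▸ hd⟩
end

section
/- Let k be a field and y an irreducible binary quadratic form over k (with nonzero discriminant). Then the separable cubic algebra k(y*) associated to the binary cubic form y* = v₂·y is isomorphic to k̃(y) × k, where k̃(y) is the quadratic étale algebra determined by y. -/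
open Polynomial

/-- Product congruence for algebra equivalences. -/
noncomputable def algEquivProdCongr {R A A' B B' : Type*} [CommSemiring R]
    [Semiring A] [Semiring A'] [Semiring B] [Semiring B']
    [Algebra R A] [Algebra R A'] [Algebra R B] [Algebra R B']
    (f : A ≃ₐ[R] A') (g : B ≃ₐ[R] B') : (A × B) ≃ₐ[R] (A' × B') :=
  AlgEquiv.ofRingEquiv (f := RingEquiv.prodCongr f.toRingEquiv g.toRingEquiv)
    (fun r => by
      simp [RingEquiv.prodCongr, Prod.algebraMap_apply, AlgEquiv.commutes])

/-- Let `y = y₁v₁² + y₂v₁v₂ + y₃v₂²` be an irreducible binary quadratic form over a field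
`k` with nonzero discriminant. The cubic étale algebra `k(y*)` associated to the binary
cubic form `y* = v₂·y` (whose zero locus in `ℙ¹` consists of the two roots of `y`
together with the extra rational point; concretely realized by the degree-3 polynomial
`t·(y₃t² + y₂t + y₁)` obtained from `y*` by swapping the variables) is isomorphic to
`k̃(y) × k`, where `k̃(y) = k[t]/(y(t,1))` is the quadratic étale algebra of `y`. -/
theorem cubic_algebra_of_quadratic_is_quadratic_times_k
    {k : Type*} [Field k] (y₁ y₂ y₃ : k)
    (hy₁ : y₁ ≠ 0) (hdisc : y₂ ^ 2 - 4 * y₁ * y₃ ≠ 0)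
    (hirr : Irreducible (C y₁ * X ^ 2 + C y₂ * X + C y₃)) :
    Nonempty ((AdjoinRoot (X * (C y₃ * X ^ 2 + C y₂ * X + C y₁))) ≃ₐ[k]
      ((AdjoinRoot (C y₁ * X ^ 2 + C y₂ * X + C y₃)) × k)) := by
  classical
  set q : k[X] := C y₁ * X ^ 2 + C y₂ * X + C y₃ with hq
  set qr : k[X] := C y₃ * X ^ 2 + C y₂ * X + C y₁ with hqr
  have hdeg : q.natDegree = 2 := by rw [hq]; compute_degree!
  -- y₃ ≠ 0 since q is irreducible (no root at 0)
  have hy₃ : y₃ ≠ 0 := by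
    intro h
    have hroot : IsRoot q 0 := by simp [hq, h]
    have hdvd : (X : k[X]) ∣ q := by
      simpa using dvd_iff_isRoot.mpr hroot
    obtain ⟨c, hc⟩ := hdvd
    rcases hirr.isUnit_or_isUnit hc with h1 | h2
    · exact Polynomial.not_isUnit_X h1
    · have hc0 : c.natDegree = 0 := natDegree_eq_zero_of_isUnit h2
      have hcne : c ≠ 0 := by
        rintro rfl
        rw [mul_zero] at hc
        rw [hc] at hdeg
        simp at hdeg
      have : q.natDegree = 1 := by
        rw [hc, natDegree_mul X_ne_zero hcne, natDegree_X, hc0]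
      omega
  have hdegqr : qr.natDegree = 2 := by rw [hqr]; compute_degree!
  have hqrne : qr ≠ 0 := by
    intro h; rw [h] at hdegqr; simp at hdegqr
  haveI : Nontrivial (AdjoinRoot qr) := by
    apply AdjoinRoot.nontrivial
    rw [degree_eq_natDegree hqrne, hdegqr]
    norm_num
  -- coprimality of X and qr
  have hcop : IsCoprime (X : k[X]) qr := by
    refine ⟨-C y₁⁻¹ * (C y₃ * X + C y₂), C y₁⁻¹, ?_⟩
    rw [hqr]
    have h1 : (C y₁⁻¹ : k[X]) * C y₁ = 1 := by
      rw [← C_mul, inv_mul_cancel₀ hy₁, C_1]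
    linear_combination h1
  have hcopI : IsCoprime (Ideal.span {(X : k[X])}) (Ideal.span {qr}) :=
    (Ideal.isCoprime_span_singleton_iff _ _).mpr hcop
  -- CRT
  have hspan : Ideal.span {X * qr} = Ideal.span {(X : k[X])} * Ideal.span {qr} :=
    (Ideal.span_singleton_mul_span_singleton _ _).symm
  let e₀ : AdjoinRoot (X * qr) ≃ₐ[k]
      (k[X] ⧸ (Ideal.span {(X : k[X])} * Ideal.span {qr})) :=
    Ideal.quotientEquivAlgOfEq k hspan
  let e₁ : (k[X] ⧸ (Ideal.span {(X : k[X])} * Ideal.span {qr})) ≃ₐ[k]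
      ((k[X] ⧸ Ideal.span {(X : k[X])}) × (k[X] ⧸ Ideal.span {qr})) :=
    AlgEquiv.ofRingEquiv (f := Ideal.quotientMulEquivQuotientProd _ _ hcopI)
      (fun r => by
        have : (algebraMap k (k[X] ⧸ (Ideal.span {(X : k[X])} * Ideal.span {qr}))) r =
            Ideal.Quotient.mk _ (C r) := rfl
        rw [this]
        apply Prod.ext
        · rw [Ideal.quotientMulEquivQuotientProd_fst]
          rfl
        · rw [Ideal.quotientMulEquivQuotientProd_snd]
          rfl)
  -- k[X]/(X) ≃ k
  have hXeq : Ideal.span {(X : k[X])} = Ideal.span {X - C (0 : k)} := by simp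
  let eX : (k[X] ⧸ Ideal.span {(X : k[X])}) ≃ₐ[k] k :=
    (Ideal.quotientEquivAlgOfEq k hXeq).trans (Polynomial.quotientSpanXSubCAlgEquiv 0)
  -- AdjoinRoot qr ≃ AdjoinRoot q
  haveI : Fact (Irreducible q) := ⟨hirr⟩
  set r : AdjoinRoot q := AdjoinRoot.root q with hr
  have hqroot : algebraMap k _ y₁ * r ^ 2 + algebraMap k _ y₂ * r + algebraMap k _ y₃ = 0 := by
    have := AdjoinRoot.eval₂_root q
    rw [hq] at this
    simpa [AdjoinRoot.algebraMap_eq, sq] using this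
  set s : AdjoinRoot q := algebraMap k _ (-y₃⁻¹) * (algebraMap k _ y₁ * r + algebraMap k _ y₂)
    with hs
  have hrs : r * s = 1 := by
    have h1 : algebraMap k (AdjoinRoot q) y₁ * r ^ 2 + algebraMap k _ y₂ * r
        = - algebraMap k _ y₃ := by linear_combination hqroot
    rw [hs]
    have h2 : r * (algebraMap k (AdjoinRoot q) (-y₃⁻¹)
        * (algebraMap k _ y₁ * r + algebraMap k _ y₂))
        = algebraMap k _ (-y₃⁻¹)
          * (algebraMap k _ y₁ * r ^ 2 + algebraMap k _ y₂ * r) := by ring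
    rw [h2, h1, ← map_neg, ← map_mul, neg_mul_neg, inv_mul_cancel₀ hy₃, map_one]
  have hru : IsUnit r := IsUnit.of_mul_eq_one _ hrs
  have hqrs : (aeval s) qr = 0 := by
    have key : (aeval s) qr * r ^ 2 = 0 := by
      rw [hqr]
      simp only [map_add, map_mul, map_pow, aeval_C, aeval_X]
      have h3 : (algebraMap k (AdjoinRoot q) y₃ * s ^ 2 + algebraMap k _ y₂ * s
          + algebraMap k _ y₁) * r ^ 2
          = algebraMap k _ y₃ * (s * r) ^ 2 + algebraMap k _ y₂ * (s * r) * r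
          + algebraMap k _ y₁ * r ^ 2 := by ring
      rw [h3, mul_comm s r, hrs]
      linear_combination hqroot
    exact (mul_eq_zero.mp key).resolve_right (hru.pow 2).ne_zero
  let φ : AdjoinRoot qr →ₐ[k] AdjoinRoot q := AdjoinRoot.liftAlgHom qr (Algebra.ofId k _) s hqrs
  -- and the inverse direction
  set r' : AdjoinRoot qr := AdjoinRoot.root qr with hr'
  have hqrroot : algebraMap k _ y₃ * r' ^ 2 + algebraMap k _ y₂ * r' + algebraMap k _ y₁
      = 0 := by
    have := AdjoinRoot.eval₂_root qr
    rw [hqr] at this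
    simpa [AdjoinRoot.algebraMap_eq, sq] using this
  set s' : AdjoinRoot qr := algebraMap k _ (-y₁⁻¹) * (algebraMap k _ y₃ * r'
    + algebraMap k _ y₂) with hs'
  have hrs' : r' * s' = 1 := by
    have h1 : algebraMap k (AdjoinRoot qr) y₃ * r' ^ 2 + algebraMap k _ y₂ * r'
        = - algebraMap k _ y₁ := by linear_combination hqrroot
    rw [hs']
    have h2 : r' * (algebraMap k (AdjoinRoot qr) (-y₁⁻¹)
        * (algebraMap k _ y₃ * r' + algebraMap k _ y₂))
        = algebraMap k _ (-y₁⁻¹)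
          * (algebraMap k _ y₃ * r' ^ 2 + algebraMap k _ y₂ * r') := by ring
    rw [h2, h1, ← map_neg, ← map_mul, neg_mul_neg, inv_mul_cancel₀ hy₁, map_one]
  have hru' : IsUnit r' := IsUnit.of_mul_eq_one _ hrs'
  have hqs' : (aeval s') q = 0 := by
    have key : (aeval s') q * r' ^ 2 = 0 := by
      rw [hq]
      simp only [map_add, map_mul, map_pow, aeval_C, aeval_X]
      have h3 : (algebraMap k (AdjoinRoot qr) y₁ * s' ^ 2 + algebraMap k _ y₂ * s'
          + algebraMap k _ y₃) * r' ^ 2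
          = algebraMap k _ y₁ * (s' * r') ^ 2 + algebraMap k _ y₂ * (s' * r') * r'
          + algebraMap k _ y₃ * r' ^ 2 := by ring
      rw [h3, mul_comm s' r', hrs']
      linear_combination hqrroot
    have h5 : (aeval s') q * (r' * s') ^ 2 = (aeval s') q * r' ^ 2 * s' ^ 2 := by ring
    rw [hrs'] at h5
    simp only [one_pow, mul_one] at h5
    rw [h5, key, zero_mul]
  let ψ : AdjoinRoot q →ₐ[k] AdjoinRoot qr := AdjoinRoot.liftAlgHom q (Algebra.ofId k _) s' hqs'
  have hφr' : φ r' = s := by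
    show (AdjoinRoot.liftAlgHom qr (Algebra.ofId k _) s hqrs) (AdjoinRoot.root qr) = s
    exact AdjoinRoot.liftAlgHom_root (h := hqrs) ..
  have hψr : ψ r = s' := by
    show (AdjoinRoot.liftAlgHom q (Algebra.ofId k _) s' hqs') (AdjoinRoot.root q) = s'
    exact AdjoinRoot.liftAlgHom_root (h := hqs') ..
  have hφs' : φ s' = r := by
    rw [hs']
    simp only [map_mul, map_add, AlgHom.commutes, hφr']
    have hkey : algebraMap k (AdjoinRoot q) y₃ * s + algebraMap k _ y₂
        = - (algebraMap k _ y₁) * r := by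
      have h1 : (algebraMap k (AdjoinRoot q) y₃ * s + algebraMap k _ y₂
          + algebraMap k _ y₁ * r) * r = 0 := by
        have expand : (algebraMap k (AdjoinRoot q) y₃ * s + algebraMap k _ y₂
            + algebraMap k _ y₁ * r) * r
            = algebraMap k _ y₃ * (s * r) + algebraMap k _ y₂ * r
            + algebraMap k _ y₁ * r ^ 2 := by ring
        rw [expand, mul_comm s r, hrs]
        linear_combination hqroot
      have := (mul_eq_zero.mp h1).resolve_right hru.ne_zero
      linear_combination this
    rw [hkey]
    have h4 : algebraMap k (AdjoinRoot q) (-y₁⁻¹) * (-(algebraMap k _ y₁) * r)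
        = algebraMap k _ (y₁⁻¹ * y₁) * r := by
      rw [map_neg, map_mul]; ring
    rw [h4, inv_mul_cancel₀ hy₁, map_one, one_mul]
  have hψs : ψ s = r' := by
    rw [hs]
    simp only [map_mul, map_add, AlgHom.commutes, hψr]
    have hkey : algebraMap k (AdjoinRoot qr) y₁ * s' + algebraMap k _ y₂
        = - (algebraMap k _ y₃) * r' := by
      have h1 : (algebraMap k (AdjoinRoot qr) y₁ * s' + algebraMap k _ y₂
          + algebraMap k _ y₃ * r') * r' = 0 := by
        have expand : (algebraMap k (AdjoinRoot qr) y₁ * s' + algebraMap k _ y₂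
            + algebraMap k _ y₃ * r') * r'
            = algebraMap k _ y₁ * (s' * r') + algebraMap k _ y₂ * r'
            + algebraMap k _ y₃ * r' ^ 2 := by ring
        rw [expand, mul_comm s' r', hrs']
        linear_combination hqrroot
      have h6 : (algebraMap k (AdjoinRoot qr) y₁ * s' + algebraMap k _ y₂
          + algebraMap k _ y₃ * r') * (r' * s')
          = ((algebraMap k (AdjoinRoot qr) y₁ * s' + algebraMap k _ y₂
          + algebraMap k _ y₃ * r') * r') * s' := by ring
      rw [hrs', mul_one, h1, zero_mul] at h6
      linear_combination h6
    rw [hkey]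
    have h4 : algebraMap k (AdjoinRoot qr) (-y₃⁻¹) * (-(algebraMap k _ y₃) * r')
        = algebraMap k _ (y₃⁻¹ * y₃) * r' := by
      rw [map_neg, map_mul]; ring
    rw [h4, inv_mul_cancel₀ hy₃, map_one, one_mul]
  let eqr : AdjoinRoot qr ≃ₐ[k] AdjoinRoot q := by
    refine AlgEquiv.ofAlgHom φ ψ ?_ ?_
    · apply AdjoinRoot.algHom_ext
      show φ (ψ r) = r
      rw [hψr, hφs']
    · apply AdjoinRoot.algHom_ext
      show ψ (φ r') = r'
      rw [hφr', hψs]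
  -- assemble
  let eswap : ((k[X] ⧸ Ideal.span {(X : k[X])}) × (k[X] ⧸ Ideal.span {qr})) ≃ₐ[k]
      ((AdjoinRoot q) × k) :=
    (algEquivProdCongr eX eqr).trans
      (AlgEquiv.ofRingEquiv (f := RingEquiv.prodComm)
        (fun x => by simp [Prod.algebraMap_apply, RingEquiv.prodComm]))
  exact ⟨e₀.trans (e₁.trans eswap)⟩
end

section
/- Let K be a non-archimedean local field with integer ring O and residue cardinality q, and let F/K be an unramified quadratic extension with O_F = O[θ]. Let T, N denote trace and norm of F/K. Then for Re(a), Re(b) large, ∫_{(K^×)²×K} |t₁|^a |t₂|^b 1_{O}(t₁) 1_{O}(t₁T(u+t₂θ)) 1_{O}(t₁N(u+t₂θ)) d^×t₁ d^×t₂ du = (1−q^{1−2a+b})^{-1}(1−q^{-b})^{-1}(1+q^{-a}). -/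
open MeasureTheory
open scoped Classical ENNReal NNReal

section Aux

variable {K : Type*} [NormedField K] [MeasurableSpace K] [BorelSpace K]

/-- Ultrametric: if `‖x‖ < ‖y‖` then `‖x + y‖ = ‖y‖`. -/
lemma aux_ultra_add_eq (hultra : ∀ x y : K, ‖x + y‖ ≤ max ‖x‖ ‖y‖)
    {x y : K} (h : ‖x‖ < ‖y‖) : ‖x + y‖ = ‖y‖ := by
  have h1 : ‖x + y‖ ≤ ‖y‖ := (hultra x y).trans (by simp [h.le])
  have h2 : ‖y‖ ≤ max ‖x + y‖ ‖x‖ := by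
    have h3 := hultra (x + y) (-x)
    have h4 : x + y + -x = y := by ring
    rw [h4, norm_neg] at h3
    exact h3
  rcases eq_or_lt_of_le h1 with he | hlt
  · exact he
  · exfalso
    have : max ‖x + y‖ ‖x‖ < ‖y‖ := max_lt hlt h
    exact absurd h2 (not_le.2 this)

/-- Measure of balls for the additive Haar measure. -/
lemma aux_ball_meas
    (hultra : ∀ x y : K, ‖x + y‖ ≤ max ‖x‖ ‖y‖)
    (q : ℕ) (hq : 1 < q)
    (hval : ∀ x : K, x ≠ 0 → ∃ n : ℤ, ‖x‖ = (q : ℝ) ^ n)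
    (hsurj : ∀ n : ℤ, ∃ x : K, x ≠ 0 ∧ ‖x‖ = (q : ℝ) ^ n)
    (μ : Measure K)
    (hμinv : ∀ a : K, Measure.map (fun x => a + x) μ = μ)
    (hμO : μ {x : K | ‖x‖ ≤ 1} = 1)
    (hres : ∃ S : Finset K, S.card = q ∧ (∀ x : K, ‖x‖ ≤ 1 → ∃ s ∈ S, ‖x - s‖ < 1) ∧
      ∀ s ∈ S, ∀ t ∈ S, s ≠ t → ‖s - t‖ = 1) :
    ∀ m : ℤ, μ {x : K | ‖x‖ ≤ (q : ℝ) ^ m} = ENNReal.ofReal ((q : ℝ) ^ m) := by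
  have hq1 : (1:ℝ) < q := by exact_mod_cast hq
  have hq0 : (0:ℝ) < q := lt_trans one_pos hq1
  obtain ⟨S, hcard, hcover, hsep⟩ := hres
  obtain ⟨s₁, hs₁S, hs₁⟩ := hcover 0 (by simp)
  rw [zero_sub, norm_neg] at hs₁
  have hSO : ∀ s ∈ S, ‖s‖ ≤ 1 := by
    intro s hsS
    by_contra h
    push_neg at h
    have hne : s ≠ s₁ := by rintro rfl; exact absurd hs₁ (not_lt.2 h.le)
    have h1 : ‖s - s₁‖ = 1 := hsep s hsS s₁ hs₁S hne
    have h2 : ‖-s₁ + s‖ = ‖s‖ :=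
      aux_ultra_add_eq hultra (by rw [norm_neg]; exact lt_trans hs₁ h)
    rw [show -s₁ + s = s - s₁ by ring] at h2
    rw [h2] at h1
    exact absurd h1.le (not_le.2 h)
  have hBmeas : ∀ r : ℝ, MeasurableSet {x : K | ‖x‖ ≤ r} := fun r =>
    measurable_norm measurableSet_Iic
  have hTmeas : ∀ (c : K) (r : ℝ), MeasurableSet {x : K | ‖x - c‖ ≤ r} := by
    intro c r
    have : Measurable fun x : K => ‖x - c‖ := (measurable_id.sub_const c).norm
    exact this measurableSet_Iic
  have hstep : ∀ m : ℤ, μ {x : K | ‖x‖ ≤ (q:ℝ)^m} = q * μ {x : K | ‖x‖ ≤ (q:ℝ)^(m-1)} := by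
    intro m
    obtain ⟨z, hz0, hzn⟩ := hsurj m
    have hcov : {x : K | ‖x‖ ≤ (q:ℝ)^m}
        = ⋃ s ∈ S, {x : K | ‖x - z*s‖ ≤ (q:ℝ)^(m-1)} := by
      ext x
      simp only [Set.mem_setOf_eq, Set.mem_iUnion, exists_prop]
      constructor
      · intro hx
        have hy : ‖x * z⁻¹‖ ≤ 1 := by
          rw [norm_mul, norm_inv, hzn, mul_inv_le_iff₀ (zpow_pos hq0 m), one_mul]
          exact hx
        obtain ⟨s, hsS, hys⟩ := hcover _ hy
        refine ⟨s, hsS, ?_⟩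
        have hxz : x - z*s = z * (x * z⁻¹ - s) := by
          field_simp
        have hlt : ‖x - z*s‖ < (q:ℝ)^m := by
          rw [hxz, norm_mul, hzn]
          calc (q:ℝ)^m * ‖x*z⁻¹ - s‖ < (q:ℝ)^m * 1 :=
                mul_lt_mul_of_pos_left hys (zpow_pos hq0 m)
            _ = (q:ℝ)^m := mul_one _
        rcases eq_or_ne (x - z*s) 0 with h0 | h0
        · rw [h0, norm_zero]; positivity
        · obtain ⟨n, hn⟩ := hval _ h0
          rw [hn] at hlt ⊢
          have hnm : n < m := (zpow_lt_zpow_iff_right₀ hq1).1 hlt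
          exact (zpow_le_zpow_iff_right₀ hq1).2 (by omega)
      · rintro ⟨s, hsS, hxs⟩
        have h1 : ‖z*s‖ ≤ (q:ℝ)^m := by
          rw [norm_mul, hzn]
          calc (q:ℝ)^m * ‖s‖ ≤ (q:ℝ)^m * 1 :=
                mul_le_mul_of_nonneg_left (hSO s hsS) (zpow_pos hq0 m).le
            _ = _ := mul_one _
        have h2 := hultra (x - z*s) (z*s)
        rw [show x - z*s + z*s = x by ring] at h2
        refine h2.trans (max_le (hxs.trans ?_) h1)
        exact zpow_le_zpow_right₀ hq1.le (by omega)
    have hdisj : (↑S : Set K).PairwiseDisjoint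
        (fun s => {x : K | ‖x - z*s‖ ≤ (q:ℝ)^(m-1)}) := by
      intro s hsS t htS hst
      refine Set.disjoint_left.2 fun x hxs hxt => ?_
      simp only [Set.mem_setOf_eq] at hxs hxt
      have h1 : ‖z*s - z*t‖ ≤ (q:ℝ)^(m-1) := by
        have h2 := hultra (z*s - x) (x - z*t)
        rw [show z*s - x + (x - z*t) = z*s - z*t by ring] at h2
        refine h2.trans (max_le ?_ hxt)
        rw [← norm_neg, neg_sub]
        exact hxs
      have h2 : ‖z*s - z*t‖ = (q:ℝ)^m := by
        rw [← mul_sub, norm_mul, hzn, hsep s hsS t htS hst, mul_one]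
      rw [h2] at h1
      have := (zpow_le_zpow_iff_right₀ hq1).1 h1
      omega
    have htrans : ∀ s : K, μ {x : K | ‖x - s‖ ≤ (q:ℝ)^(m-1)}
        = μ {x : K | ‖x‖ ≤ (q:ℝ)^(m-1)} := by
      intro s
      conv_lhs => rw [← hμinv s]
      rw [Measure.map_apply (measurable_const_add s) (hTmeas s ((q:ℝ)^(m-1)))]
      congr 1
      ext x
      simp [add_sub_cancel_left]
    rw [hcov, measure_biUnion_finset hdisj (fun s _ => hTmeas (z*s) _)]
    rw [Finset.sum_congr rfl (fun s _ => htrans (z*s)), Finset.sum_const, hcard,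
      nsmul_eq_mul]
  intro m
  induction m using Int.induction_on with
  | zero => simpa using hμO
  | succ n ih =>
    have hs := hstep ((n:ℤ)+1)
    rw [show ((n:ℤ)+1-1 : ℤ) = (n:ℤ) by ring] at hs
    rw [hs, ih, show ((q:ℝ)^((n:ℤ)+1)) = (q:ℝ) * (q:ℝ)^(n:ℤ) by
      rw [zpow_add_one₀ (ne_of_gt hq0)]; ring]
    rw [ENNReal.ofReal_mul hq0.le]
    congr 1
    exact_mod_cast ENNReal.ofReal_natCast q
  | pred n ih =>
    have hs := hstep (-(n:ℤ))
    rw [ih] at hs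
    have hqne : ((q:ℕ) : ℝ≥0∞) ≠ 0 := Nat.cast_ne_zero.2 (by omega)
    have key : ((q:ℕ) : ℝ≥0∞) * μ {x : K | ‖x‖ ≤ (q:ℝ)^(-(n:ℤ)-1)}
        = ((q:ℕ) : ℝ≥0∞) * ENNReal.ofReal ((q:ℝ)^(-(n:ℤ)-1)) := by
      rw [← hs]
      rw [show ((q:ℝ)^(-(n:ℤ))) = (q:ℝ) * (q:ℝ)^(-(n:ℤ)-1) by
        conv_lhs => rw [show (-(n:ℤ)) = (-(n:ℤ)-1) + 1 by ring]
        rw [zpow_add_one₀ (ne_of_gt hq0)]; ring]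
      rw [ENNReal.ofReal_mul hq0.le]
      congr 1
      exact ENNReal.ofReal_natCast q
    exact (ENNReal.mul_right_inj hqne (ENNReal.natCast_ne_top q)).1 key

/-- Measure of shells for the multiplicative Haar measure. -/
lemma aux_shell_meas (q : ℕ) (hq : 1 < q)
    (hsurj : ∀ n : ℤ, ∃ x : K, x ≠ 0 ∧ ‖x‖ = (q : ℝ) ^ n)
    (ν : Measure K)
    (hνinv : ∀ a : K, a ≠ 0 → Measure.map (fun x => a * x) ν = ν)
    (hνO : ν {x : K | ‖x‖ = 1} = 1) :
    ∀ n : ℤ, ν {x : K | ‖x‖ = (q:ℝ)^n} = 1 := by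
  have hq1 : (1:ℝ) < q := by exact_mod_cast hq
  have hq0 : (0:ℝ) < q := lt_trans one_pos hq1
  intro n
  obtain ⟨z, hz0, hzn⟩ := hsurj n
  have hmeas : MeasurableSet {x : K | ‖x‖ = (q:ℝ)^n} :=
    measurable_norm (measurableSet_singleton _)
  conv_lhs => rw [← hνinv z hz0]
  rw [Measure.map_apply (measurable_const_mul z) hmeas]
  have hpre : (fun x : K => z * x) ⁻¹' {x : K | ‖x‖ = (q:ℝ)^n} = {x : K | ‖x‖ = 1} := by
    ext x
    simp only [Set.mem_preimage, Set.mem_setOf_eq, norm_mul, hzn]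
    constructor
    · intro h
      have := (mul_right_eq_self₀.1 h)
      rcases this with h1 | h1
      · exact h1
      · exact absurd h1 (ne_of_gt (zpow_pos hq0 n))
    · intro h; rw [h, mul_one]
  rw [hpre, hνO]

/-- Integral of a function supported on shells of norm `q^(m-j)`, `j : ℕ`, constant
on each shell. -/
lemma aux_shell_integral (q : ℕ) (hq : 1 < q)
    (hval : ∀ x : K, x ≠ 0 → ∃ n : ℤ, ‖x‖ = (q : ℝ) ^ n)
    (ν : Measure K)
    (hshell : ∀ n : ℤ, ν {x : K | ‖x‖ = (q:ℝ)^n} = 1)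
    (m : ℤ) (f : K → ℝ) (c : ℕ → ℝ)
    (h0 : f 0 = 0)
    (hout : ∀ x : K, (q:ℝ)^m < ‖x‖ → f x = 0)
    (hfs : ∀ (x : K) (j : ℕ), ‖x‖ = (q:ℝ)^(m - (j:ℤ)) → f x = c j)
    (hc : ∀ j, 0 ≤ c j) (hsum : Summable c) :
    ∫ x, f x ∂ν = ∑' j, c j := by
  have hq1 : (1:ℝ) < q := by exact_mod_cast hq
  have hq0 : (0:ℝ) < q := lt_trans one_pos hq1
  set U : ℕ → Set K := fun j => {x : K | ‖x‖ = (q:ℝ)^(m - (j:ℤ))} with hU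
  have hUmeas : ∀ j, MeasurableSet (U j) := fun j =>
    measurable_norm (measurableSet_singleton _)
  have hUdisj : Pairwise (Function.onFun Disjoint U) := by
    intro i j hij
    refine Set.disjoint_left.2 fun x hxi hxj => ?_
    have hxi' : ‖x‖ = (q:ℝ)^(m - (i:ℤ)) := hxi
    have hxj' : ‖x‖ = (q:ℝ)^(m - (j:ℤ)) := hxj
    have he : (q:ℝ)^(m - (i:ℤ)) = (q:ℝ)^(m - (j:ℤ)) := by rw [← hxi', hxj']
    have h1 := (zpow_le_zpow_iff_right₀ hq1).1 he.le
    have h2 := (zpow_le_zpow_iff_right₀ hq1).1 he.ge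
    exact hij (by omega)
  have hcover : ∀ x : K, x ∉ (⋃ j, U j) → f x = 0 := by
    intro x hx
    rcases eq_or_ne x 0 with rfl | hx0
    · exact h0
    rcases lt_or_ge ((q:ℝ)^m) ‖x‖ with h | h
    · exact hout x h
    obtain ⟨n, hn⟩ := hval x hx0
    have hnm : n ≤ m := by
      rw [hn] at h
      exact (zpow_le_zpow_iff_right₀ hq1).1 h
    exact absurd (Set.mem_iUnion.2 ⟨(m - n).toNat, by
      simp only [hU, Set.mem_setOf_eq, hn]
      congr 1
      omega⟩) hx
  have hfe : f = Set.indicator (⋃ j, U j) f := by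
    funext x
    by_cases hx : x ∈ ⋃ j, U j
    · rw [Set.indicator_of_mem hx]
    · rw [Set.indicator_of_notMem hx f, hcover x hx]
  have hfmeas : Measurable f := by
    have hrep : f = Set.indicator (⋃ j, U j)
        (fun x => c (m - ⌊Real.logb q ‖x‖⌋).toNat) := by
      funext x
      by_cases hx : x ∈ ⋃ j, U j
      · rw [Set.indicator_of_mem hx]
        obtain ⟨j, hj⟩ := Set.mem_iUnion.1 hx
        have hxn : ‖x‖ = (q:ℝ)^(m - (j:ℤ)) := hj
        rw [hfs x j hxn, hxn]
        rw [← Real.rpow_intCast (q:ℝ) (m - (j:ℤ)), Real.logb_rpow hq0 (ne_of_gt hq1)]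
        rw [Int.floor_intCast]
        congr 1
        omega
      · rw [Set.indicator_of_notMem hx
            (fun x => c (m - ⌊Real.logb (q:ℝ) ‖x‖⌋).toNat), hcover x hx]
    rw [hrep]
    have hlogb : Measurable fun x : K => Real.logb q ‖x‖ :=
      (Real.measurable_log.comp measurable_norm).div_const _
    have h1 : Measurable fun z : ℤ => c (m - z).toNat := measurable_from_top
    have h2 : Measurable fun x : K => ⌊Real.logb (q:ℝ) ‖x‖⌋ :=
      Int.measurable_floor.comp hlogb
    exact (h1.comp h2).indicator (MeasurableSet.iUnion hUmeas)
  have hUone : ∀ j, ν (U j) = 1 := fun j => hshell _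
  have hint : IntegrableOn f (⋃ j, U j) ν := by
    constructor
    · exact hfmeas.aestronglyMeasurable.restrict
    · show (∫⁻ x, ‖f x‖₊ ∂(ν.restrict (⋃ j, U j))) < ⊤
      have hl : (∫⁻ x in (⋃ j, U j), (‖f x‖₊ : ℝ≥0∞) ∂ν)
          = ∑' j, ∫⁻ x in U j, (‖f x‖₊ : ℝ≥0∞) ∂ν :=
        lintegral_iUnion hUmeas hUdisj _
      have hje : ∀ j, (∫⁻ x in U j, (‖f x‖₊ : ℝ≥0∞) ∂ν) = ENNReal.ofReal (c j) := by
        intro j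
        rw [setLIntegral_congr_fun (hUmeas j)
          ((fun x hx => by
            rw [hfs x j hx])),
          setLIntegral_const, hUone, mul_one]
        exact Real.enorm_eq_ofReal (hc j)
      calc (∫⁻ x in (⋃ j, U j), (‖f x‖₊ : ℝ≥0∞) ∂ν)
          = ∑' j, ENNReal.ofReal (c j) := by rw [hl]; exact tsum_congr hje
        _ = ENNReal.ofReal (∑' j, c j) := (ENNReal.ofReal_tsum_of_nonneg hc hsum).symm
        _ < ⊤ := ENNReal.ofReal_lt_top
  calc ∫ x, f x ∂ν = ∫ x, Set.indicator (⋃ j, U j) f x ∂ν := by rw [← hfe]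
    _ = ∫ x in (⋃ j, U j), f x ∂ν := integral_indicator (MeasurableSet.iUnion hUmeas)
    _ = ∑' j, ∫ x in U j, f x ∂ν := integral_iUnion hUmeas hUdisj hint
    _ = ∑' j, c j := tsum_congr fun j => by
        rw [setIntegral_congr_fun (hUmeas j) (fun x hx => hfs x j hx),
          setIntegral_const, measureReal_def, hUone j, ENNReal.toReal_one, one_smul]

end Aux

/-- Explicit local zeta formula at a finite place, unramified case.  `K` is a
non-archimedean local field with ring of integers `O = {‖x‖ ≤ 1}`, residue cardinality
`q`, value group `q^ℤ`, `μ` the additive Haar measure with `μ(O) = 1` and `ν` the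
multiplicative Haar measure with `ν(O^×) = 1`.  `F/K` is an unramified quadratic
extension with `O_F = O[θ]`, encoded by the norm identity
`‖N(a + bθ)‖ = max(‖a‖,‖b‖)²` and trace bound `‖T(a + bθ)‖ ≤ max(‖a‖,‖b‖)`.
Then for `a, b` in the convergence range,
`∫ |t₁|^a |t₂|^b 1_O(t₁) 1_O(t₁T(u+t₂θ)) 1_O(t₁N(u+t₂θ)) d^×t₁ d^×t₂ du
  = (1−q^{1−2a+b})⁻¹ (1−q^{-b})⁻¹ (1+q^{-a})`. -/
theorem local_zeta_unramified_explicit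
    (K : Type*) [NormedField K] [MeasurableSpace K] [BorelSpace K]
    (hultra : ∀ x y : K, ‖x + y‖ ≤ max ‖x‖ ‖y‖)
    (q : ℕ) (hq : 1 < q)
    (hval : ∀ x : K, x ≠ 0 → ∃ n : ℤ, ‖x‖ = (q : ℝ) ^ n)
    (hsurj : ∀ n : ℤ, ∃ x : K, x ≠ 0 ∧ ‖x‖ = (q : ℝ) ^ n)
    (μ ν : Measure K)
    (hμinv : ∀ a : K, Measure.map (fun x => a + x) μ = μ)
    (hμO : μ {x : K | ‖x‖ ≤ 1} = 1)
    (hres : ∃ S : Finset K, S.card = q ∧ (∀ x : K, ‖x‖ ≤ 1 → ∃ s ∈ S, ‖x - s‖ < 1) ∧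
      ∀ s ∈ S, ∀ t ∈ S, s ≠ t → ‖s - t‖ = 1)
    (hνinv : ∀ a : K, a ≠ 0 → Measure.map (fun x => a * x) ν = ν)
    (hνO : ν {x : K | ‖x‖ = 1} = 1)
    (hν0 : ν {(0 : K)} = 0)
    (F : Type*) [Field F] [Algebra K F] (hrank : Module.finrank K F = 2)
    (θ : F)
    (hNorm : ∀ a b : K,
      ‖Algebra.norm K (algebraMap K F a + algebraMap K F b * θ)‖ = max ‖a‖ ‖b‖ ^ 2)
    (hTr : ∀ a b : K,
      ‖Algebra.trace K F (algebraMap K F a + algebraMap K F b * θ)‖ ≤ max ‖a‖ ‖b‖) :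
    ∀ a b : ℝ, 0 < b → b + 1 < 2 * a →
      (∫ t₁, ∫ t₂, ∫ u,
          (if ‖t₁‖ ≤ 1 ∧
              ‖t₁ * Algebra.trace K F (algebraMap K F u + algebraMap K F t₂ * θ)‖ ≤ 1 ∧
              ‖t₁ * Algebra.norm K (algebraMap K F u + algebraMap K F t₂ * θ)‖ ≤ 1
            then ‖t₁‖ ^ a * ‖t₂‖ ^ b else 0) ∂μ ∂ν ∂ν)
        = (1 - (q : ℝ) ^ (1 - 2 * a + b))⁻¹ * (1 - (q : ℝ) ^ (-b))⁻¹ *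
            (1 + (q : ℝ) ^ (-a)) := by
  intro a b hb hab
  have hq1 : (1:ℝ) < q := by exact_mod_cast hq
  have hq0 : (0:ℝ) < q := lt_trans one_pos hq1
  have ha : 0 < a := by linarith
  have hballμ := aux_ball_meas hultra q hq hval hsurj μ hμinv hμO hres
  have hshellν := aux_shell_meas q hq hsurj ν hνinv hνO
  set r : ℝ := (q:ℝ) ^ (-b) with hrdef
  set t : ℝ := (q:ℝ) ^ (1 - 2*a + b) with htdef
  have hr0 : 0 ≤ r := Real.rpow_nonneg hq0.le _
  have hr1 : r < 1 := Real.rpow_lt_one_of_one_lt_of_neg hq1 (by linarith)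
  have ht0 : 0 ≤ t := Real.rpow_nonneg hq0.le _
  have ht1 : t < 1 := Real.rpow_lt_one_of_one_lt_of_neg hq1 (by linarith)
  -- rpow helpers
  have hrpow_zpow : ∀ n : ℤ, ((q:ℝ)^n : ℝ) = (q:ℝ) ^ ((n : ℤ) : ℝ) := fun n =>
    (Real.rpow_intCast _ n).symm
  have hadd : ∀ x y : ℝ, (q:ℝ)^x * (q:ℝ)^y = (q:ℝ)^(x+y) := fun x y =>
    (Real.rpow_add hq0 x y).symm
  have hpa : ∀ x y : ℝ, ((q:ℝ)^x)^y = (q:ℝ)^(x*y) := fun x y =>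
    (Real.rpow_mul hq0.le x y).symm
  -- splitting q^(m-j) ^ b
  have hsplit : ∀ (m : ℤ) (j : ℕ) (e : ℝ), 0 < e →
      (((q:ℝ)^(m - (j:ℤ)) : ℝ))^e = ((q:ℝ)^m : ℝ)^e * ((q:ℝ)^(-e))^j := by
    intro m j e _
    rw [hrpow_zpow, hrpow_zpow, hpa, hpa]
    rw [← Real.rpow_natCast ((q:ℝ)^(-e)) j, hpa, hadd]
    congr 1
    push_cast
    ring
  -- condition simplification
  have hcond : ∀ t₁ t₂ u : K,
      (‖t₁‖ ≤ 1 ∧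
        ‖t₁ * Algebra.trace K F (algebraMap K F u + algebraMap K F t₂ * θ)‖ ≤ 1 ∧
        ‖t₁ * Algebra.norm K (algebraMap K F u + algebraMap K F t₂ * θ)‖ ≤ 1)
      ↔ (‖t₁‖ ≤ 1 ∧ ‖t₁‖ * max ‖u‖ ‖t₂‖ ^ 2 ≤ 1) := by
    intro t₁ t₂ u
    rw [norm_mul, norm_mul, hNorm u t₂]
    constructor
    · rintro ⟨h1, _, h3⟩; exact ⟨h1, h3⟩
    · rintro ⟨h1, h3⟩
      refine ⟨h1, ?_, h3⟩
      have hT := hTr u t₂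
      have h4 : ‖t₁‖ * ‖Algebra.trace K F (algebraMap K F u + algebraMap K F t₂ * θ)‖
          ≤ ‖t₁‖ * max ‖u‖ ‖t₂‖ := mul_le_mul_of_nonneg_left hT (norm_nonneg t₁)
      refine h4.trans ?_
      rcases le_total (max ‖u‖ ‖t₂‖) 1 with hM1 | hM1
      · calc ‖t₁‖ * max ‖u‖ ‖t₂‖ ≤ ‖t₁‖ * 1 :=
              mul_le_mul_of_nonneg_left hM1 (norm_nonneg _)
          _ ≤ 1 := by rwa [mul_one]
      · calc ‖t₁‖ * max ‖u‖ ‖t₂‖ ≤ ‖t₁‖ * max ‖u‖ ‖t₂‖ ^ 2 := by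
              refine mul_le_mul_of_nonneg_left ?_ (norm_nonneg t₁)
              nlinarith [hM1]
          _ ≤ 1 := h3
  have hrw : (∫ t₁, ∫ t₂, ∫ u,
          (if ‖t₁‖ ≤ 1 ∧
              ‖t₁ * Algebra.trace K F (algebraMap K F u + algebraMap K F t₂ * θ)‖ ≤ 1 ∧
              ‖t₁ * Algebra.norm K (algebraMap K F u + algebraMap K F t₂ * θ)‖ ≤ 1
            then ‖t₁‖ ^ a * ‖t₂‖ ^ b else 0) ∂μ ∂ν ∂ν)
      = ∫ t₁, ∫ t₂, ∫ u,
          (if ‖t₁‖ ≤ 1 ∧ ‖t₁‖ * max ‖u‖ ‖t₂‖ ^ 2 ≤ 1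
            then ‖t₁‖ ^ a * ‖t₂‖ ^ b else 0) ∂μ ∂ν ∂ν := by
    congr 1
    funext t₁
    congr 1
    funext t₂
    congr 1
    funext u
    exact if_congr (hcond t₁ t₂ u) rfl rfl
  rw [hrw]
  -- the constants on the outer shells
  set c₁ : ℕ → ℝ := fun k =>
    ((q:ℝ)^((0:ℤ) - (k:ℤ)) : ℝ)^a *
      ((q:ℝ)^((k:ℤ)/2) * (((q:ℝ)^((k:ℤ)/2) : ℝ)^b * (1 - r)⁻¹)) with hc₁def
  -- per-shell computation of the double inner integral
  have hmid : ∀ (t₁ : K) (k : ℕ), ‖t₁‖ = (q:ℝ)^((0:ℤ) - (k:ℤ)) →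
      (∫ t₂, ∫ u,
        (if ‖t₁‖ ≤ 1 ∧ ‖t₁‖ * max ‖u‖ ‖t₂‖ ^ 2 ≤ 1
          then ‖t₁‖ ^ a * ‖t₂‖ ^ b else 0) ∂μ ∂ν) = c₁ k := by
    intro t₁ k ht₁
    set m : ℤ := (k:ℤ)/2 with hmdef
    have hm1 : 2*m ≤ (k:ℤ) := by omega
    have hm2 : (k:ℤ) ≤ 2*m + 1 := by omega
    have h1 : ‖t₁‖ ≤ 1 := by
      rw [ht₁]
      have := (zpow_le_zpow_iff_right₀ (a := (q:ℝ)) hq1).2 (show (0:ℤ) - (k:ℤ) ≤ 0 by omega)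
      simpa using this
    have key : ∀ M : ℝ, (M = 0 ∨ ∃ n : ℤ, M = (q:ℝ)^n) →
        (‖t₁‖ * M^2 ≤ 1 ↔ M ≤ (q:ℝ)^m) := by
      rintro M (rfl | ⟨n, rfl⟩)
      · constructor
        · intro _; positivity
        · intro _
          rw [ht₁]
          simp [zpow_pos hq0 ((0:ℤ) - (k:ℤ)) |>.le]
      · rw [ht₁, pow_two, ← zpow_add₀ (ne_of_gt hq0), ← zpow_add₀ (ne_of_gt hq0)]
        constructor
        · intro h
          have h' : (q:ℝ)^((0:ℤ) - (k:ℤ) + (n + n)) ≤ (q:ℝ)^(0:ℤ) := by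
            simpa using h
          have := (zpow_le_zpow_iff_right₀ hq1).1 h'
          exact (zpow_le_zpow_iff_right₀ hq1).2 (by omega)
        · intro h
          have hn : n ≤ m := (zpow_le_zpow_iff_right₀ hq1).1 h
          have h' : (q:ℝ)^((0:ℤ) - (k:ℤ) + (n + n)) ≤ (q:ℝ)^(0:ℤ) :=
            (zpow_le_zpow_iff_right₀ hq1).2 (by omega)
          simpa using h'
    have hMcase : ∀ u t₂ : K, max ‖u‖ ‖t₂‖ = 0 ∨ ∃ n : ℤ, max ‖u‖ ‖t₂‖ = (q:ℝ)^n := by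
      intro u t₂
      rcases max_choice ‖u‖ ‖t₂‖ with he | he <;> rw [he]
      · rcases eq_or_ne u 0 with rfl | h
        · left; simp
        · right; exact hval u h
      · rcases eq_or_ne t₂ 0 with rfl | h
        · left; simp
        · right; exact hval t₂ h
    have hcnd : ∀ t₂ u : K,
        (‖t₁‖ ≤ 1 ∧ ‖t₁‖ * max ‖u‖ ‖t₂‖ ^ 2 ≤ 1)
        ↔ (‖u‖ ≤ (q:ℝ)^m ∧ ‖t₂‖ ≤ (q:ℝ)^m) := by
      intro t₂ u
      rw [and_iff_right h1, key _ (hMcase u t₂), max_le_iff]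
    have hBmeas : MeasurableSet {u : K | ‖u‖ ≤ (q:ℝ)^m} :=
      measurable_norm measurableSet_Iic
    have hμball : (μ {u : K | ‖u‖ ≤ (q:ℝ)^m}).toReal = (q:ℝ)^m := by
      rw [hballμ m, ENNReal.toReal_ofReal (zpow_pos hq0 m).le]
    have hinner : ∀ t₂ : K,
        (∫ u, (if ‖t₁‖ ≤ 1 ∧ ‖t₁‖ * max ‖u‖ ‖t₂‖ ^ 2 ≤ 1
          then ‖t₁‖ ^ a * ‖t₂‖ ^ b else 0) ∂μ)
        = (q:ℝ)^m * (if ‖t₂‖ ≤ (q:ℝ)^m then ‖t₁‖ ^ a * ‖t₂‖ ^ b else 0) := by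
      intro t₂
      have heq : ∀ u : K,
          (if ‖t₁‖ ≤ 1 ∧ ‖t₁‖ * max ‖u‖ ‖t₂‖ ^ 2 ≤ 1
            then ‖t₁‖ ^ a * ‖t₂‖ ^ b else 0)
          = Set.indicator {u : K | ‖u‖ ≤ (q:ℝ)^m}
              (fun _ => if ‖t₂‖ ≤ (q:ℝ)^m then ‖t₁‖ ^ a * ‖t₂‖ ^ b else 0) u := by
        intro u
        rw [Set.indicator_apply]
        by_cases hu : ‖u‖ ≤ (q:ℝ)^m <;> by_cases h2 : ‖t₂‖ ≤ (q:ℝ)^m <;>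
          simp [Set.mem_setOf_eq, hu, h2, hcnd t₂ u]
      rw [integral_congr_ae (ae_of_all _ heq), integral_indicator_const _ hBmeas,
        measureReal_def, hμball, smul_eq_mul]
    rw [integral_congr_ae (ae_of_all _ hinner)]
    -- now integrate over t₂
    have hcj : ∀ (x : K) (j : ℕ), ‖x‖ = (q:ℝ)^(m - (j:ℤ)) →
        ((q:ℝ)^m * (if ‖x‖ ≤ (q:ℝ)^m then ‖t₁‖ ^ a * ‖x‖ ^ b else 0))
        = (q:ℝ)^m * (‖t₁‖ ^ a * (((q:ℝ)^(m - (j:ℤ)) : ℝ)) ^ b) := by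
      intro x j hx
      rw [hx, if_pos ((zpow_le_zpow_iff_right₀ hq1).2 (by omega))]
    have hgeom : ∀ j : ℕ,
        (q:ℝ)^m * (‖t₁‖ ^ a * (((q:ℝ)^(m - (j:ℤ)) : ℝ)) ^ b)
        = ((q:ℝ)^m * (‖t₁‖ ^ a * (((q:ℝ)^m : ℝ)) ^ b)) * r^j := by
      intro j
      rw [hsplit m j b hb]
      ring
    have hsummable : Summable (fun j : ℕ =>
        (q:ℝ)^m * (‖t₁‖ ^ a * (((q:ℝ)^(m - (j:ℤ)) : ℝ)) ^ b)) := by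
      rw [show (fun j : ℕ => (q:ℝ)^m * (‖t₁‖ ^ a * (((q:ℝ)^(m - (j:ℤ)) : ℝ)) ^ b))
          = fun j : ℕ => ((q:ℝ)^m * (‖t₁‖ ^ a * (((q:ℝ)^m : ℝ)) ^ b)) * r^j from
        funext hgeom]
      exact (summable_geometric_of_lt_one hr0 hr1).mul_left _
    rw [aux_shell_integral q hq hval ν hshellν m _ _
      (by
        simp only [norm_zero]
        rw [if_pos (zpow_pos hq0 m).le, Real.zero_rpow (ne_of_gt hb)]
        ring)
      (fun x hx => by rw [if_neg (not_le.2 hx)]; ring)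
      hcj
      (fun j => by positivity)
      hsummable]
    rw [tsum_congr hgeom, tsum_mul_left, tsum_geometric_of_lt_one hr0 hr1]
    simp only [hc₁def]
    rw [ht₁, ← hmdef]
    ring
  -- outer integral over t₁
  have houter : (∫ t₁, ∫ t₂, ∫ u,
      (if ‖t₁‖ ≤ 1 ∧ ‖t₁‖ * max ‖u‖ ‖t₂‖ ^ 2 ≤ 1
        then ‖t₁‖ ^ a * ‖t₂‖ ^ b else 0) ∂μ ∂ν ∂ν) = ∑' k, c₁ k := by
    refine aux_shell_integral q hq hval ν hshellν 0 _ c₁ ?_ ?_ (fun x k hx => hmid x k hx)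
      ?_ ?_
    · simp [Real.zero_rpow (ne_of_gt ha)]
    · intro x hx
      have h1 : ¬ (‖x‖ ≤ 1) := by
        push_neg
        simpa using hx
      simp [h1]
    · intro k
      rw [hc₁def]
      have : (0:ℝ) < 1 - r := by linarith
      positivity
    · -- Summable c₁, proved via even/odd below; we inline a direct proof
      have heven : ∀ i : ℕ, c₁ (2*i) = (1 - r)⁻¹ * t^i := by
        intro i
        simp only [hc₁def]
        rw [show ((0:ℤ) - ((2*i : ℕ):ℤ)) = (-(2*(i:ℤ)) : ℤ) by push_cast; ring,
          show (((2*i : ℕ):ℤ)/2) = (i:ℤ) by omega]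
        rw [hrpow_zpow, hrpow_zpow, hpa, hpa]
        rw [htdef, ← Real.rpow_natCast ((q:ℝ)^(1 - 2*a + b)) i, hpa]
        rw [show ((q:ℝ)^((((-(2*(i:ℤ))) : ℤ):ℝ) * a) *
            ((q:ℝ)^(((i:ℤ):ℝ)) * ((q:ℝ)^((((i:ℤ)):ℝ) * b) * (1 - r)⁻¹)))
          = ((q:ℝ)^((((-(2*(i:ℤ))) : ℤ):ℝ) * a) * (q:ℝ)^(((i:ℤ):ℝ)) *
            (q:ℝ)^((((i:ℤ)):ℝ) * b)) * (1 - r)⁻¹ by ring]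
        rw [hadd, hadd]
        rw [show ((1 - 2*a + b) * (i:ℝ)) = ((((-(2*(i:ℤ))) : ℤ):ℝ) * a + (((i:ℤ)):ℝ) +
          (((i:ℤ)):ℝ) * b) by push_cast; ring]
        ring
      have hodd : ∀ i : ℕ, c₁ (2*i+1) = ((q:ℝ)^(-a) * (1 - r)⁻¹) * t^i := by
        intro i
        simp only [hc₁def]
        rw [show ((0:ℤ) - ((2*i+1 : ℕ):ℤ)) = (-(2*(i:ℤ)+1) : ℤ) by push_cast; ring,
          show (((2*i+1 : ℕ):ℤ)/2) = (i:ℤ) by omega]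
        rw [hrpow_zpow, hrpow_zpow, hpa, hpa]
        rw [htdef, ← Real.rpow_natCast ((q:ℝ)^(1 - 2*a + b)) i, hpa]
        rw [show ((q:ℝ)^((((-(2*(i:ℤ)+1)) : ℤ):ℝ) * a) *
            ((q:ℝ)^(((i:ℤ):ℝ)) * ((q:ℝ)^((((i:ℤ)):ℝ) * b) * (1 - r)⁻¹)))
          = ((q:ℝ)^((((-(2*(i:ℤ)+1)) : ℤ):ℝ) * a) * (q:ℝ)^(((i:ℤ):ℝ)) *
            (q:ℝ)^((((i:ℤ)):ℝ) * b)) * (1 - r)⁻¹ by ring]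
        rw [hadd, hadd]
        rw [show ((q:ℝ)^(-a) * (1 - r)⁻¹) * (q:ℝ)^((1 - 2*a + b) * (i:ℝ))
          = ((q:ℝ)^(-a) * (q:ℝ)^((1 - 2*a + b) * (i:ℝ))) * (1 - r)⁻¹ by ring]
        rw [hadd]
        rw [show (-a + (1 - 2*a + b) * (i:ℝ)) = ((((-(2*(i:ℤ)+1)) : ℤ):ℝ) * a +
          (((i:ℤ)):ℝ) + (((i:ℤ)):ℝ) * b) by push_cast; ring]
      have hse : HasSum (fun i : ℕ => c₁ (2*i)) ((1 - r)⁻¹ * (1 - t)⁻¹) := by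
        rw [funext heven]
        exact (hasSum_geometric_of_lt_one ht0 ht1).mul_left _
      have hso : HasSum (fun i : ℕ => c₁ (2*i+1)) (((q:ℝ)^(-a) * (1 - r)⁻¹) * (1 - t)⁻¹) := by
        rw [funext hodd]
        exact (hasSum_geometric_of_lt_one ht0 ht1).mul_left _
      exact (hse.even_add_odd hso).summable
  rw [houter]
  -- final summation
  have heven : ∀ i : ℕ, c₁ (2*i) = (1 - r)⁻¹ * t^i := by
    intro i
    simp only [hc₁def]
    rw [show ((0:ℤ) - ((2*i : ℕ):ℤ)) = (-(2*(i:ℤ)) : ℤ) by push_cast; ring,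
      show (((2*i : ℕ):ℤ)/2) = (i:ℤ) by omega]
    rw [hrpow_zpow, hrpow_zpow, hpa, hpa]
    rw [htdef, ← Real.rpow_natCast ((q:ℝ)^(1 - 2*a + b)) i, hpa]
    rw [show ((q:ℝ)^((((-(2*(i:ℤ))) : ℤ):ℝ) * a) *
        ((q:ℝ)^(((i:ℤ):ℝ)) * ((q:ℝ)^((((i:ℤ)):ℝ) * b) * (1 - r)⁻¹)))
      = ((q:ℝ)^((((-(2*(i:ℤ))) : ℤ):ℝ) * a) * (q:ℝ)^(((i:ℤ):ℝ)) *
        (q:ℝ)^((((i:ℤ)):ℝ) * b)) * (1 - r)⁻¹ by ring]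
    rw [hadd, hadd]
    rw [show ((1 - 2*a + b) * (i:ℝ)) = ((((-(2*(i:ℤ))) : ℤ):ℝ) * a + (((i:ℤ)):ℝ) +
      (((i:ℤ)):ℝ) * b) by push_cast; ring]
    ring
  have hodd : ∀ i : ℕ, c₁ (2*i+1) = ((q:ℝ)^(-a) * (1 - r)⁻¹) * t^i := by
    intro i
    simp only [hc₁def]
    rw [show ((0:ℤ) - ((2*i+1 : ℕ):ℤ)) = (-(2*(i:ℤ)+1) : ℤ) by push_cast; ring,
      show (((2*i+1 : ℕ):ℤ)/2) = (i:ℤ) by omega]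
    rw [hrpow_zpow, hrpow_zpow, hpa, hpa]
    rw [htdef, ← Real.rpow_natCast ((q:ℝ)^(1 - 2*a + b)) i, hpa]
    rw [show ((q:ℝ)^((((-(2*(i:ℤ)+1)) : ℤ):ℝ) * a) *
        ((q:ℝ)^(((i:ℤ):ℝ)) * ((q:ℝ)^((((i:ℤ)):ℝ) * b) * (1 - r)⁻¹)))
      = ((q:ℝ)^((((-(2*(i:ℤ)+1)) : ℤ):ℝ) * a) * (q:ℝ)^(((i:ℤ):ℝ)) *
        (q:ℝ)^((((i:ℤ)):ℝ) * b)) * (1 - r)⁻¹ by ring]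
    rw [hadd, hadd]
    rw [show ((q:ℝ)^(-a) * (1 - r)⁻¹) * (q:ℝ)^((1 - 2*a + b) * (i:ℝ))
      = ((q:ℝ)^(-a) * (q:ℝ)^((1 - 2*a + b) * (i:ℝ))) * (1 - r)⁻¹ by ring]
    rw [hadd]
    rw [show (-a + (1 - 2*a + b) * (i:ℝ)) = ((((-(2*(i:ℤ)+1)) : ℤ):ℝ) * a +
      (((i:ℤ)):ℝ) + (((i:ℤ)):ℝ) * b) by push_cast; ring]
  have hse : HasSum (fun i : ℕ => c₁ (2*i)) ((1 - r)⁻¹ * (1 - t)⁻¹) := by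
    rw [funext heven]
    exact (hasSum_geometric_of_lt_one ht0 ht1).mul_left _
  have hso : HasSum (fun i : ℕ => c₁ (2*i+1)) (((q:ℝ)^(-a) * (1 - r)⁻¹) * (1 - t)⁻¹) := by
    rw [funext hodd]
    exact (hasSum_geometric_of_lt_one ht0 ht1).mul_left _
  rw [(hse.even_add_odd hso).tsum_eq]
  ring
end
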